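/- Let (R,m) be a Noetherian local ring and C a finitely generated R-module. Then the set of attached primes of the Artinian module Hom_R(C, E(R/m)) equals the set of associated primes of C: Att_R(Hom_R(C,E(R/m))) = Ass_R(C). -/

import Mathlib

open CategoryTheory CategoryTheory.Limits Opposite

noncomputable section

namespace GLC

variable {R : Type} [CommRing R]
/-- The inverse system of quotients `M/a^n M`, `n : ℕ`, with the canonical
projections `M/a^{n+1}M → M/a^n M`. -/
def quotPowersDiagram (a : Ideal R) (M : ModuleCat.{0} R) : ℕᵒᵖ ⥤ ModuleCat.{0} R :=
  Functor.ofOpSequence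
    (X := fun n => ModuleCat.of R (M ⧸ (a ^ n • ⊤ : Submodule R M)))
    (fun n => ModuleCat.ofHom (Submodule.mapQ _ _ LinearMap.id
      (Submodule.smul_mono (Ideal.pow_le_pow_right (Nat.le_succ n)) le_rfl)))

/-- The diagram `n ↦ Ext^i(M/a^n M, -)` whose colimit is generalized local cohomology. -/
def diagram (a : Ideal R) (M : ModuleCat.{0} R) (i : ℕ) :
    ℕᵒᵖᵒᵖ ⥤ ModuleCat.{0} R ⥤ ModuleCat.{0} R :=
  (quotPowersDiagram a M).op ⋙ Ext R (ModuleCat.{0} R) i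

/-- The generalized local cohomology functor `H^i_a(M, -)`,
`N ↦ colim_n Ext^i(M/a^n M, N)`. -/
def glcFunctor (a : Ideal R) (i : ℕ) (M : ModuleCat.{0} R) :
    ModuleCat.{0} R ⥤ ModuleCat.{0} R :=
  colimit (diagram a M i)

/-- Generalized local cohomology `H^i_a(M,N) = colim_n Ext^i(M/a^nM, N)`. -/
def glc (a : Ideal R) (i : ℕ) (M N : ModuleCat.{0} R) : ModuleCat.{0} R :=
  (glcFunctor a i M).obj N


/-- The `a`-torsion submodule `Γ_a(X) = {x : aⁿ x = 0 for some n}`. -/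
def torsionSubmodule (a : Ideal R) (X : Type) [AddCommGroup X] [Module R X] :
    Submodule R X where
  carrier := {x | ∃ n : ℕ, ∀ r ∈ a ^ n, r • x = 0}
  zero_mem' := ⟨0, fun r _ => smul_zero r⟩
  add_mem' := by
    rintro x y ⟨n, hn⟩ ⟨m, hm⟩
    exact ⟨max n m, fun r hr => by
      rw [smul_add, hn r (Ideal.pow_le_pow_right (le_max_left n m) hr),
        hm r (Ideal.pow_le_pow_right (le_max_right n m) hr), add_zero]⟩
  smul_mem' := by
    rintro c x ⟨n, hn⟩
    exact ⟨n, fun r hr => by rw [smul_comm, hn r hr, smul_zero]⟩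

/-- The `a`-torsion functor `Γ_a`. -/
def torsionFunctor (a : Ideal R) : ModuleCat.{0} R ⥤ ModuleCat.{0} R where
  obj X := ModuleCat.of R (torsionSubmodule a X)
  map f := ModuleCat.ofHom (f.hom.restrict (by
    rintro x ⟨n, hn⟩
    exact ⟨n, fun r hr => by rw [← map_smul, hn r hr, map_zero]⟩))
  map_id _ := by ext x; rfl
  map_comp _ _ := by ext x; rfl

instance (a : Ideal R) : (torsionFunctor (R := R) a).Additive where
  map_add := by intros; ext x; rfl


/-- `pd M ≤ n`, expressed via vanishing of `Ext^i(M,-)` for `i > n`. -/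
def pdLE (M : ModuleCat.{0} R) (n : ℕ) : Prop :=
  ∀ i : ℕ, n < i → ∀ N : ModuleCat.{0} R,
    Subsingleton (((Ext R (ModuleCat.{0} R) i).obj (op M)).obj N)

/-- The projective dimension of `M`, as an element of `ℕ∞`. -/
def projDim (M : ModuleCat.{0} R) : ℕ∞ := sInf ((↑) '' {n : ℕ | pdLE M n})

/-- `injdim R ≤ n` (as a module over itself), via vanishing of `Ext^i(-,R)` for `i > n`. -/
def injDimRingLE (R : Type) [CommRing R] (n : ℕ) : Prop :=
  ∀ i : ℕ, n < i → ∀ N : ModuleCat.{0} R,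
    Subsingleton (((Ext R (ModuleCat.{0} R) i).obj (op N)).obj (ModuleCat.of R R))

/-- A Gorenstein local ring: Noetherian local with finite self-injective dimension. -/
def IsGorensteinLocalRing (R : Type) [CommRing R] : Prop :=
  IsNoetherianRing R ∧ IsLocalRing R ∧ ∃ n : ℕ, injDimRingLE R n

/-- Krull dimension of a module, i.e. of `R` modulo its annihilator. -/
def moduleDim (R : Type) [CommRing R] (N : Type) [AddCommGroup N] [Module R N] :
    WithBot ℕ∞ :=
  ringKrullDim (R ⧸ Module.annihilator R N)

/-- Depth of a module over a local ring, as the least `i` with `Ext^i(R/m, N) ≠ 0`. -/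
def moduleDepth (R : Type) [CommRing R] [IsLocalRing R] (N : ModuleCat.{0} R) : ℕ∞ :=
  sInf ((↑) '' {i : ℕ | ¬ Subsingleton
    (((Ext R (ModuleCat.{0} R) i).obj
      (op (ModuleCat.of R (R ⧸ IsLocalRing.maximalIdeal R)))).obj N)})

/-- `S` is a `p`-secondary submodule: nonzero, every `r : R` acts on `S` either
surjectively or nilpotently, and `p` is the radical of the annihilator of `S`. -/
def IsSecondaryWith {M : Type} [AddCommGroup M] [Module R M]
    (S : Submodule R M) (p : Ideal R) : Prop :=
  S ≠ ⊥ ∧ S.annihilator.radical = p ∧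
    ∀ r : R, (∀ x ∈ S, ∃ y ∈ S, r • y = x) ∨ r ∈ S.annihilator.radical

/-- The attached primes of a module: the primes occurring in some minimal secondary
representation. -/
def attachedPrimes (R M : Type) [CommRing R] [AddCommGroup M] [Module R M] :
    Set (Ideal R) :=
  { q | ∃ (n : ℕ) (S : Fin n → Submodule R M) (p : Fin n → Ideal R),
      (⨆ i, S i) = ⊤ ∧ (∀ i, IsSecondaryWith (S i) (p i)) ∧ Function.Injective p ∧
      (∀ i : Fin n, (⨆ j ∈ ({i}ᶜ : Set (Fin n)), S j) ≠ ⊤) ∧ ∃ i, p i = q }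

/-- `E` is an injective hull of the residue field `R/m`: it is injective and is an
essential extension of (a copy of) `R/m`. -/
def IsResidueFieldInjectiveHull (R : Type) [CommRing R] [IsLocalRing R]
    (E : Type) [AddCommGroup E] [Module R E] : Prop :=
  Module.Injective R E ∧ ∃ ι : (R ⧸ IsLocalRing.maximalIdeal R) →ₗ[R] E,
    Function.Injective ι ∧ ∀ S : Submodule R E, S ≠ ⊥ → LinearMap.range ι ⊓ S ≠ ⊥

/-- The submodule `(0 :_A J)` of elements annihilated by the ideal `J`. -/
def annIn (J : Ideal R) (A : Type) [AddCommGroup A] [Module R A] : Submodule R A where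
  carrier := {x | ∀ r ∈ J, r • x = 0}
  zero_mem' := fun r _ => smul_zero r
  add_mem' := fun hx hy r hr => by rw [smul_add, hx r hr, hy r hr, add_zero]
  smul_mem' := fun c x hx r hr => by rw [smul_comm, hx r hr, smul_zero]

/-- A regular local ring: Noetherian local whose maximal ideal is generated by
`dim R` elements. -/
def IsRegularLocalRing (R : Type) [CommRing R] : Prop :=
  IsNoetherianRing R ∧ ∃ _ : IsLocalRing R, ∃ s : Finset R,
    Ideal.span (s : Set R) = IsLocalRing.maximalIdeal R ∧
    (s.card : WithBot ℕ∞) = ringKrullDim R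

end GLC

open GLC IsLocalRing

namespace AttAux

open Submodule

variable {R : Type} [CommRing R]

/-! #### Associated prime basics -/

lemma ap_iff [IsNoetherianRing R] {M : Type} [AddCommGroup M] [Module R M] {p : Ideal R} :
    p ∈ associatedPrimes R M ↔ p.IsPrime ∧ ∃ x : M, p = (R ∙ x).annihilator := by
  rw [AssociatedPrimes.mem_iff, isAssociatedPrime_iff]
  simp only [Submodule.bot_colon']

lemma ann_span_subtype {M : Type} [AddCommGroup M] [Module R M] (N : Submodule R M)
    (y : M) (hy : y ∈ N) :
    (R ∙ (⟨y, hy⟩ : N)).annihilator = (R ∙ y).annihilator := by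
  ext r
  rw [Submodule.mem_annihilator_span_singleton, Submodule.mem_annihilator_span_singleton]
  constructor
  · intro h
    simpa using congrArg (Subtype.val) h
  · intro h
    exact Subtype.ext (by simpa using h)

lemma ann_span_smul {M : Type} [AddCommGroup M] [Module R M] {p : Ideal R} (hp : p.IsPrime)
    {x : M} (hx : p = (R ∙ x).annihilator) (s : R) (hs : s • x ≠ 0) :
    (R ∙ (s • x)).annihilator = p := by
  have hsp : s ∉ p := fun h =>
    hs ((Submodule.mem_annihilator_span_singleton _ _).mp (hx ▸ h))
  ext r
  rw [Submodule.mem_annihilator_span_singleton, smul_smul]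
  constructor
  · intro h
    have hrs : r * s ∈ p := hx ▸ (Submodule.mem_annihilator_span_singleton _ _).mpr h
    rcases hp.mem_or_mem hrs with h' | h'
    · exact h'
    · exact absurd h' hsp
  · intro h
    have : r * s ∈ p := Ideal.mul_mem_right _ _ h
    rw [hx] at this
    exact (Submodule.mem_annihilator_span_singleton _ _).mp this

lemma assPrimes_subset_union [IsNoetherianRing R] {M : Type} [AddCommGroup M] [Module R M]
    {N N' : Submodule R M} (h : N ≤ N') :
    associatedPrimes R N' ⊆ associatedPrimes R N ∪ associatedPrimes R (N'.map N.mkQ) := by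
  intro p hp0
  obtain ⟨hp, ⟨x, hxN'⟩, hx⟩ := ap_iff.mp hp0
  rw [ann_span_subtype N' x hxN'] at hx
  by_cases hcase : ∃ s : R, s • x ∈ N ∧ s • x ≠ 0
  · obtain ⟨s, hsN, hs0⟩ := hcase
    left
    exact ap_iff.mpr ⟨hp, ⟨s • x, hsN⟩, by rw [ann_span_subtype N _ hsN, ann_span_smul hp hx s hs0]⟩
  · push_neg at hcase
    right
    refine ap_iff.mpr ⟨hp, ⟨N.mkQ x, Submodule.mem_map_of_mem hxN'⟩, ?_⟩
    rw [ann_span_subtype _ _ _]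
    ext r
    rw [Submodule.mem_annihilator_span_singleton, ← map_smul, Submodule.mkQ_apply,
      Submodule.Quotient.mk_eq_zero]
    constructor
    · intro hmem
      rw [hx, Submodule.mem_annihilator_span_singleton] at hmem
      rw [hmem]
      exact N.zero_mem
    · intro hmem
      have h0 : r • x = 0 := hcase r hmem
      rw [hx, Submodule.mem_annihilator_span_singleton]
      exact h0

lemma assPrimes_subset_union_top [IsNoetherianRing R] {M : Type} [AddCommGroup M] [Module R M]
    (N : Submodule R M) :
    associatedPrimes R M ⊆ associatedPrimes R N ∪ associatedPrimes R (M ⧸ N) := by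
  intro p hp
  have h1 : associatedPrimes R M = associatedPrimes R (⊤ : Submodule R M) :=
    (LinearEquiv.AssociatedPrimes.eq (Submodule.topEquiv)).symm
  rcases assPrimes_subset_union (le_top : N ≤ ⊤) (h1 ▸ hp) with h | h
  · exact Or.inl h
  · right
    have htop : (⊤ : Submodule R M).map N.mkQ = ⊤ := by
      rw [Submodule.map_top, Submodule.range_mkQ]
    rw [htop] at h
    have e2 : associatedPrimes R (⊤ : Submodule R (M ⧸ N)) = associatedPrimes R (M ⧸ N) :=
      LinearEquiv.AssociatedPrimes.eq (Submodule.topEquiv)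
    rwa [e2] at h

lemma assPrimes_cyclic [IsNoetherianRing R] {M : Type} [AddCommGroup M] [Module R M] {p : Ideal R}
    (hp : p.IsPrime) {x : M} (hx : p = (R ∙ x).annihilator) :
    associatedPrimes R (R ∙ x : Submodule R M) ⊆ {p} := by
  intro q hq0
  obtain ⟨hq, ⟨z, hz⟩, hzq⟩ := ap_iff.mp hq0
  rw [ann_span_subtype _ z hz] at hzq
  obtain ⟨s, rfl⟩ := Submodule.mem_span_singleton.mp hz
  have hz0 : s • x ≠ 0 := by
    rintro h0
    rw [h0] at hzq
    apply hq.ne_top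
    rw [hzq, Submodule.span_zero_singleton, Submodule.annihilator_bot]
  rw [ann_span_smul hp hx s hz0] at hzq
  exact Set.mem_singleton_iff.mpr hzq

lemma assPrimes_quot_finite [IsNoetherianRing R] {M : Type} [AddCommGroup M] [Module R M]
    [IsNoetherian R M] (N : Submodule R M) : (associatedPrimes R (M ⧸ N)).Finite := by
  have wf : WellFounded ((· > ·) : Submodule R M → Submodule R M → Prop) :=
    (isNoetherian_iff.mp inferInstance)
  refine wf.induction (C := fun N => (associatedPrimes R (M ⧸ N)).Finite) N ?_
  clear N
  intro N ih
  by_cases htriv : associatedPrimes R (M ⧸ N) = ∅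
  · rw [htriv]; exact Set.finite_empty
  obtain ⟨p, hp⟩ := Set.nonempty_iff_ne_empty.mpr htriv
  obtain ⟨hprime, x, hx⟩ := ap_iff.mp hp
  have hxne : x ≠ 0 := by
    rintro rfl
    apply hprime.ne_top
    rw [hx, Submodule.span_zero_singleton, Submodule.annihilator_bot]
  set Y : Submodule R (M ⧸ N) := R ∙ x with hY
  set N' : Submodule R M := Y.comap N.mkQ with hN'
  have hle : N ≤ N' := by
    intro y hy
    simp only [hN', Submodule.mem_comap, Submodule.mkQ_apply]
    rw [(Submodule.Quotient.mk_eq_zero N).mpr hy]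
    exact Y.zero_mem
  obtain ⟨x₀, hx₀⟩ := N.mkQ_surjective x
  have hx₀N' : x₀ ∈ N' := by
    simp only [hN', Submodule.mem_comap, hx₀]
    exact Submodule.mem_span_singleton_self x
  have hx₀N : x₀ ∉ N := by
    intro hmem
    apply hxne
    rw [← hx₀, Submodule.mkQ_apply, Submodule.Quotient.mk_eq_zero]
    exact hmem
  have hNN' : N < N' := lt_of_le_of_ne hle (fun h => hx₀N (h.symm ▸ hx₀N'))
  have hmap : N'.map N.mkQ = Y :=
    Submodule.map_comap_eq_of_surjective (N.mkQ_surjective) Y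
  have e := Submodule.quotientQuotientEquivQuotient N N' hNN'.le
  have key : associatedPrimes R (M ⧸ N) ⊆
      insert p (associatedPrimes R (M ⧸ N')) := by
    intro q hq
    rcases assPrimes_subset_union_top Y hq with h | h
    · exact Set.mem_insert_iff.mpr (Or.inl (assPrimes_cyclic hprime hx h))
    · refine Set.mem_insert_iff.mpr (Or.inr ?_)
      rw [← hmap] at h
      exact (LinearEquiv.AssociatedPrimes.eq e) ▸ h
  exact Set.Finite.subset ((ih N' hNN').insert p) key

lemma assPrimes_finite [IsNoetherianRing R] {M : Type} [AddCommGroup M] [Module R M]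
    [IsNoetherian R M] : (associatedPrimes R M).Finite := by
  have h := assPrimes_quot_finite (R := R) (M := M) ⊥
  rwa [LinearEquiv.AssociatedPrimes.eq (Submodule.quotEquivOfEqBot (⊥ : Submodule R M) rfl)]
    at h

lemma exists_primary [IsNoetherianRing R] {M : Type} [AddCommGroup M] [Module R M]
    [IsNoetherian R M] {p : Ideal R} (hp : p ∈ associatedPrimes R M) :
    ∃ Q : Submodule R M, p ∉ associatedPrimes R Q ∧
      associatedPrimes R (M ⧸ Q) = {p} := by
  have hbotmem : (⊥ : Submodule R M) ∈ {N : Submodule R M | p ∉ associatedPrimes R N} := by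
    have : Subsingleton (⊥ : Submodule R M) := by
      constructor
      rintro ⟨a, ha⟩ ⟨b, hb⟩
      simp only [Submodule.mem_bot] at ha hb
      exact Subtype.ext (ha.trans hb.symm)
    simp only [Set.mem_setOf_eq, associatedPrimes.eq_empty_of_subsingleton]
    exact Set.notMem_empty p
  obtain ⟨Q, hQmem, hQmax⟩ :=
    set_has_maximal_iff_noetherian.mpr (inferInstance : IsNoetherian R M)
      {N : Submodule R M | p ∉ associatedPrimes R N} ⟨⊥, hbotmem⟩
  refine ⟨Q, hQmem, ?_⟩
  have hsub : associatedPrimes R (M ⧸ Q) ⊆ {p} := by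
    intro q hq0
    obtain ⟨hqprime, x, hx⟩ := ap_iff.mp hq0
    have hxne : x ≠ 0 := by
      rintro rfl
      apply hqprime.ne_top
      rw [hx, Submodule.span_zero_singleton, Submodule.annihilator_bot]
    set Y : Submodule R (M ⧸ Q) := R ∙ x with hY
    set Q' : Submodule R M := Y.comap Q.mkQ with hQ'def
    have hle : Q ≤ Q' := by
      intro y hy
      simp only [hQ'def, Submodule.mem_comap, Submodule.mkQ_apply]
      rw [(Submodule.Quotient.mk_eq_zero Q).mpr hy]
      exact Y.zero_mem
    obtain ⟨x₀, hx₀⟩ := Q.mkQ_surjective x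
    have hx₀Q' : x₀ ∈ Q' := by
      simp only [hQ'def, Submodule.mem_comap, hx₀]
      exact Submodule.mem_span_singleton_self x
    have hx₀Q : x₀ ∉ Q := by
      intro hmem
      apply hxne
      rw [← hx₀, Submodule.mkQ_apply, Submodule.Quotient.mk_eq_zero]
      exact hmem
    have hlt : Q < Q' := lt_of_le_of_ne hle (fun h => hx₀Q (h.symm ▸ hx₀Q'))
    have hQ'ass : p ∈ associatedPrimes R Q' := by
      by_contra hc
      exact hQmax Q' hc hlt
    have hmap : Q'.map Q.mkQ = Y :=
      Submodule.map_comap_eq_of_surjective (Q.mkQ_surjective) Y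
    rcases assPrimes_subset_union hle hQ'ass with h | h
    · exact absurd h hQmem
    · rw [hmap] at h
      exact Set.mem_singleton_iff.mpr (Set.mem_singleton_iff.mp
        (assPrimes_cyclic hqprime hx h)).symm
  have hmem : p ∈ associatedPrimes R (M ⧸ Q) := by
    rcases assPrimes_subset_union_top Q hp with h | h
    · exact absurd h hQmem
    · exact h
  exact hsub.antisymm (Set.singleton_subset_iff.mpr hmem)

lemma pow_smul_eq_zero [IsNoetherianRing R] {M : Type} [AddCommGroup M] [Module R M]
    [IsNoetherian R M] {p : Ideal R} (hAss : associatedPrimes R M = {p}) {r : R}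
    (hr : r ∈ p) : ∃ k : ℕ, ∀ x : M, r ^ k • x = 0 := by
  have hmono : Monotone (fun k => LinearMap.ker (LinearMap.lsmul R M (r ^ k))) := by
    intro a b hab x hx
    simp only [LinearMap.mem_ker, LinearMap.lsmul_apply] at hx ⊢
    obtain ⟨c, rfl⟩ := Nat.exists_eq_add_of_le hab
    rw [pow_add, mul_comm, mul_smul, hx, smul_zero]
  obtain ⟨K, hK⟩ := monotone_stabilizes_iff_noetherian.mpr inferInstance ⟨_, hmono⟩
  set N : Submodule R M := LinearMap.ker (LinearMap.lsmul R M (r ^ K)) with hN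
  have hNtop : N = ⊤ := by
    by_contra hne
    have hnt : Nontrivial (M ⧸ N) :=
      Submodule.Quotient.nontrivial_iff.mpr hne
    obtain ⟨q, hq⟩ := associatedPrimes.nonempty R (M ⧸ N)
    obtain ⟨hqprime, xb, hxb⟩ := ap_iff.mp hq
    obtain ⟨x, rfl⟩ := N.mkQ_surjective xb
    have hxb0 : N.mkQ x ≠ 0 := by
      rintro h0
      apply hqprime.ne_top
      rw [hxb, h0, Submodule.span_zero_singleton, Submodule.annihilator_bot]
    have hmemN : ∀ s : R, s • x ∈ N ↔ s ∈ q := by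
      intro s
      rw [hxb, Submodule.mem_annihilator_span_singleton, ← map_smul]
      rw [Submodule.mkQ_apply, Submodule.Quotient.mk_eq_zero]
    have hstab : N = LinearMap.ker (LinearMap.lsmul R M (r ^ (K + 1))) :=
      hK (K + 1) (Nat.le_succ K)
    have hrq : r ∉ q := by
      intro hrq
      have h1 : r • x ∈ N := (hmemN r).mpr hrq
      simp only [hN, LinearMap.mem_ker, LinearMap.lsmul_apply] at h1
      have h2 : x ∈ N := by
        rw [hstab]
        simp only [LinearMap.mem_ker, LinearMap.lsmul_apply]
        rw [pow_succ, mul_smul, h1]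
      apply hxb0
      rw [Submodule.mkQ_apply, Submodule.Quotient.mk_eq_zero]
      exact h2
    set y : M := r ^ K • x with hy
    have hy0 : y ≠ 0 := by
      intro h0
      apply hxb0
      rw [Submodule.mkQ_apply, Submodule.Quotient.mk_eq_zero]
      simp only [hN, LinearMap.mem_ker, LinearMap.lsmul_apply]
      exact h0
    have hann : q = (R ∙ y).annihilator := by
      ext s
      rw [Submodule.mem_annihilator_span_singleton, hy, smul_comm]
      constructor
      · intro hs
        have : s • x ∈ N := (hmemN s).mpr hs
        simpa only [hN, LinearMap.mem_ker, LinearMap.lsmul_apply] using this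
      · intro hs
        apply (hmemN s).mp
        simpa only [hN, LinearMap.mem_ker, LinearMap.lsmul_apply] using hs
    have hqM : q ∈ associatedPrimes R M := ap_iff.mpr ⟨hqprime, y, hann⟩
    rw [hAss] at hqM
    exact hrq (Set.mem_singleton_iff.mp hqM ▸ hr)
  refine ⟨K, fun x => ?_⟩
  have hx : x ∈ N := hNtop ▸ Submodule.mem_top
  simpa only [hN, LinearMap.mem_ker, LinearMap.lsmul_apply] using hx

/-! #### Functionals into the injective hull -/

variable {E : Type} [AddCommGroup E] [Module R E]

lemma exists_functional [IsLocalRing R] (hE : GLC.IsResidueFieldInjectiveHull R E)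
    {M : Type} [AddCommGroup M] [Module R M] {z : M} (hz : z ≠ 0) :
    ∃ f : M →ₗ[R] E, f z ≠ 0 := by
  obtain ⟨hInj, ι₀, hιinj, -⟩ := hE
  set τ := LinearMap.toSpanSingleton R M z with hτ
  have hker : LinearMap.ker τ ≤ IsLocalRing.maximalIdeal R := by
    apply IsLocalRing.le_maximalIdeal
    intro htop
    apply hz
    have h1 : (1 : R) ∈ LinearMap.ker τ := htop ▸ Submodule.mem_top
    simpa only [LinearMap.mem_ker, hτ, LinearMap.toSpanSingleton_apply_one] using h1
  set g₀ : R →ₗ[R] E := ι₀ ∘ₗ (IsLocalRing.maximalIdeal R).mkQ with hg₀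
  have hkerg₀ : LinearMap.ker τ ≤ LinearMap.ker g₀ := by
    intro r hr
    simp only [hg₀, LinearMap.mem_ker, LinearMap.comp_apply, Submodule.mkQ_apply]
    rw [(Submodule.Quotient.mk_eq_zero (IsLocalRing.maximalIdeal R)).mpr (hker hr), map_zero]
  set gq : (R ⧸ LinearMap.ker τ) →ₗ[R] E := Submodule.liftQ _ g₀ hkerg₀ with hgq
  set e := τ.quotKerEquivRange with he
  obtain ⟨f, hf⟩ := hInj.out (LinearMap.range τ).subtype (Submodule.injective_subtype _)
      (gq ∘ₗ (e.symm : (LinearMap.range τ) →ₗ[R] (R ⧸ LinearMap.ker τ)))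
  refine ⟨f, ?_⟩
  have hzr : z ∈ LinearMap.range τ := ⟨1, by simp [hτ]⟩
  have hval := hf ⟨z, hzr⟩
  simp only [Submodule.coe_subtype, LinearMap.comp_apply] at hval
  have hz1 : (⟨z, hzr⟩ : LinearMap.range τ) = ⟨τ 1, LinearMap.mem_range_self τ 1⟩ :=
    Subtype.ext (by simp [hτ])
  have hsymm : e.symm ⟨z, hzr⟩ = (LinearMap.ker τ).mkQ 1 := by
    rw [hz1, he]
    exact LinearMap.quotKerEquivRange_symm_apply_image τ 1 (LinearMap.mem_range_self τ 1)
  rw [hval, LinearEquiv.coe_coe, hsymm]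
  simp only [hgq, Submodule.mkQ_apply, Submodule.liftQ_apply, hg₀, LinearMap.comp_apply]
  intro h0
  apply (IsLocalRing.maximalIdeal.isMaximal R).ne_top
  rw [Ideal.eq_top_iff_one]
  rw [← Submodule.Quotient.mk_eq_zero (IsLocalRing.maximalIdeal R)]
  apply hιinj
  rw [map_zero]
  exact h0

/-! #### The dual construction -/

/-- The submodule of functionals vanishing on `Q`. -/
def pperp {C : Type} [AddCommGroup C] [Module R C] (E : Type) [AddCommGroup E] [Module R E]
    (Q : Submodule R C) : Submodule R (C →ₗ[R] E) where
  carrier := {f | ∀ x ∈ Q, f x = 0}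
  zero_mem' := fun x _ => rfl
  add_mem' := by
    intro f g hf hg x hx
    simp only [LinearMap.add_apply, hf x hx, hg x hx, add_zero]
  smul_mem' := by
    intro c f hf x hx
    simp only [LinearMap.smul_apply, hf x hx, smul_zero]

lemma mem_pperp {C : Type} [AddCommGroup C] [Module R C] {E : Type} [AddCommGroup E]
    [Module R E] {Q : Submodule R C} {f : C →ₗ[R] E} :
    f ∈ pperp E Q ↔ ∀ x ∈ Q, f x = 0 := Iff.rfl

lemma comp_mkQ_mem_pperp {C : Type} [AddCommGroup C] [Module R C] {E : Type} [AddCommGroup E]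
    [Module R E] (Q : Submodule R C) (g : (C ⧸ Q) →ₗ[R] E) :
    g ∘ₗ Q.mkQ ∈ pperp E Q := by
  intro x hx
  simp only [LinearMap.comp_apply, Submodule.mkQ_apply]
  rw [(Submodule.Quotient.mk_eq_zero Q).mpr hx, map_zero]

lemma pperp_ne_bot [IsLocalRing R] {C : Type} [AddCommGroup C] [Module R C] {E : Type}
    [AddCommGroup E] [Module R E] (hE : GLC.IsResidueFieldInjectiveHull R E)
    {Q : Submodule R C} (hQ : Q ≠ ⊤) : pperp E Q ≠ ⊥ := by
  have : Nontrivial (C ⧸ Q) := Submodule.Quotient.nontrivial_iff.mpr hQ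
  obtain ⟨xb, hxb⟩ := exists_ne (0 : C ⧸ Q)
  obtain ⟨g, hg⟩ := exists_functional hE hxb
  rw [Submodule.ne_bot_iff]
  refine ⟨g ∘ₗ Q.mkQ, comp_mkQ_mem_pperp Q g, ?_⟩
  intro h0
  obtain ⟨x, rfl⟩ := Q.mkQ_surjective xb
  apply hg
  have := congrArg (fun f : C →ₗ[R] E => f x) h0
  simpa using this

lemma pperp_ne_top [IsLocalRing R] {C : Type} [AddCommGroup C] [Module R C] {E : Type}
    [AddCommGroup E] [Module R E] (hE : GLC.IsResidueFieldInjectiveHull R E)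
    {N : Submodule R C} (hN : N ≠ ⊥) : pperp E N ≠ ⊤ := by
  obtain ⟨z, hzN, hz0⟩ := (Submodule.ne_bot_iff N).mp hN
  obtain ⟨f, hf⟩ := exists_functional hE hz0
  intro htop
  exact hf ((htop ▸ Submodule.mem_top : f ∈ pperp E N) z hzN)

lemma pperp_anti {C : Type} [AddCommGroup C] [Module R C] (E : Type) [AddCommGroup E]
    [Module R E] {N Q : Submodule R C} (h : N ≤ Q) : pperp E Q ≤ pperp E N :=
  fun f hf x hx => hf x (h hx)

lemma isSecondaryWith_pperp [IsNoetherianRing R] [IsLocalRing R]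
    {C : Type} [AddCommGroup C] [Module R C] [IsNoetherian R C] {E : Type}
    [AddCommGroup E] [Module R E] (hE : GLC.IsResidueFieldInjectiveHull R E)
    {Q : Submodule R C} {p : Ideal R} (hQ : associatedPrimes R (C ⧸ Q) = {p}) :
    GLC.IsSecondaryWith (pperp E Q) p := by
  have hpmem : p ∈ associatedPrimes R (C ⧸ Q) := hQ ▸ rfl
  obtain ⟨hp, xw, hxw⟩ := ap_iff.mp hpmem
  have hxwne : xw ≠ 0 := by
    rintro rfl
    apply hp.ne_top
    rw [hxw, Submodule.span_zero_singleton, Submodule.annihilator_bot]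
  have hQtop : Q ≠ ⊤ := by
    rintro rfl
    obtain ⟨x, rfl⟩ := (⊤ : Submodule R C).mkQ_surjective xw
    exact hxwne ((Submodule.Quotient.mk_eq_zero ⊤).mpr trivial)
  have hann : (pperp E Q).annihilator = (⊤ : Submodule R (C ⧸ Q)).annihilator := by
    apply le_antisymm
    · intro r hr
      rw [Submodule.mem_annihilator] at hr ⊢
      intro nb _
      by_contra hne
      obtain ⟨g, hg⟩ := exists_functional hE hne
      have hmem := hr (g ∘ₗ Q.mkQ) (comp_mkQ_mem_pperp Q g)
      obtain ⟨x, rfl⟩ := Q.mkQ_surjective nb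
      apply hg
      have := congrArg (fun f : C →ₗ[R] E => f x) hmem
      simpa only [LinearMap.smul_apply, LinearMap.comp_apply, Submodule.mkQ_apply,
        LinearMap.zero_apply, ← map_smul] using this
    · intro r hr
      rw [Submodule.mem_annihilator] at hr ⊢
      intro f hf
      have hf' : f ∈ pperp E Q := hf
      ext x
      have h1 : r • Q.mkQ x = 0 := hr (Q.mkQ x) Submodule.mem_top
      simp only [Submodule.mkQ_apply] at h1
      obtain ⟨g, hg⟩ : ∃ g : (C ⧸ Q) →ₗ[R] E, f = g ∘ₗ Q.mkQ :=
        ⟨Q.liftQ f (fun x hx => LinearMap.mem_ker.mpr (hf' x hx)), by ext y; simp⟩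
      rw [hg]
      simp only [LinearMap.smul_apply, LinearMap.comp_apply, Submodule.mkQ_apply,
        LinearMap.zero_apply]
      rw [← map_smul, h1, map_zero]
  have hrad : (⊤ : Submodule R (C ⧸ Q)).annihilator.radical = p := by
    apply le_antisymm
    · have h1 : (⊤ : Submodule R (C ⧸ Q)).annihilator ≤ p := by
        intro r hr
        rw [hxw, Submodule.mem_annihilator_span_singleton]
        exact Submodule.mem_annihilator.mp hr xw Submodule.mem_top
      calc (⊤ : Submodule R (C ⧸ Q)).annihilator.radical
          ≤ p.radical := Ideal.radical_mono h1
        _ = p := hp.radical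
    · intro r hr
      obtain ⟨k, hk⟩ := pow_smul_eq_zero hQ hr
      exact ⟨k, Submodule.mem_annihilator.mpr (fun n _ => hk n)⟩
  refine ⟨pperp_ne_bot hE hQtop, by rw [hann]; exact hrad, ?_⟩
  intro r
  by_cases hrp : r ∈ p
  · right; rw [hann, hrad]; exact hrp
  · left
    have hinj : Function.Injective (LinearMap.lsmul R (C ⧸ Q) r) := by
      rw [← LinearMap.ker_eq_bot, Submodule.eq_bot_iff]
      intro v hv
      by_contra hv0
      obtain ⟨P, hP, hle⟩ := exists_le_isAssociatedPrime_of_isNoetherianRing R v hv0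
      have hPp : P = p := Set.mem_singleton_iff.mp (hQ ▸ hP)
      apply hrp
      rw [← hPp]
      apply hle
      rw [Submodule.mem_colon_singleton]
      simpa using hv
    intro f hf
    obtain ⟨h, hh⟩ := (hE.1).out (LinearMap.lsmul R (C ⧸ Q) r) hinj
        (Q.liftQ f (fun x hx => LinearMap.mem_ker.mpr (hf x hx)))
    refine ⟨h ∘ₗ Q.mkQ, comp_mkQ_mem_pperp Q h, ?_⟩
    ext x
    simp only [LinearMap.smul_apply, LinearMap.comp_apply, Submodule.mkQ_apply]
    rw [← map_smul]
    have h2 := hh (Submodule.Quotient.mk x)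
    simp only [LinearMap.lsmul_apply, Submodule.liftQ_apply] at h2
    rw [h2]

lemma sup_pperp_eq_top [IsLocalRing R] {C : Type} [AddCommGroup C] [Module R C] {E : Type}
    [AddCommGroup E] [Module R E] (hE : GLC.IsResidueFieldInjectiveHull R E)
    {n : ℕ} (Q : Fin n → Submodule R C) (hQ : (⨅ i, Q i) = ⊥) :
    (⨆ i, pperp E (Q i)) = ⊤ := by
  classical
  rw [eq_top_iff]
  intro f _
  set e : C →ₗ[R] (∀ i, C ⧸ Q i) := LinearMap.pi (fun i => (Q i).mkQ) with he
  have heinj : Function.Injective e := by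
    rw [← LinearMap.ker_eq_bot, he, LinearMap.ker_pi]
    simpa only [Submodule.ker_mkQ] using hQ
  obtain ⟨h, hh⟩ := (hE.1).out e heinj f
  have hf : f = ∑ i, (h ∘ₗ LinearMap.single R (fun i => C ⧸ Q i) i ∘ₗ (Q i).mkQ) := by
    ext x
    rw [LinearMap.sum_apply]
    simp only [LinearMap.comp_apply, Submodule.mkQ_apply, LinearMap.coe_single]
    rw [← map_sum]
    have hsum : (∑ i, Pi.single i ((Submodule.Quotient.mk x : C ⧸ Q i))) = e x := by
      rw [← Finset.univ_sum_single (e x)]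
      rfl
    rw [hsum, hh]
  rw [hf]
  apply Submodule.sum_mem
  intro i _
  apply Submodule.mem_iSup_of_mem i
  intro x hx
  simp only [LinearMap.comp_apply, Submodule.mkQ_apply, LinearMap.coe_single]
  rw [(Submodule.Quotient.mk_eq_zero (Q i)).mpr hx]
  rw [Pi.single_zero, map_zero]

lemma assPrimes_pi [IsNoetherianRing R] {ι : Type} [Fintype ι] (M : ι → Type) [∀ i, AddCommGroup (M i)]
    [∀ i, Module R (M i)] :
    associatedPrimes R (∀ i, M i) ⊆ ⋃ i, associatedPrimes R (M i) := by
  intro p hp0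
  obtain ⟨hp, x, hx⟩ := ap_iff.mp hp0
  have key : (Finset.univ.inf fun i => (R ∙ x i).annihilator) ≤ p := by
    intro r hr
    rw [hx, Submodule.mem_annihilator_span_singleton]
    funext i
    have hle := Finset.inf_le (s := Finset.univ) (f := fun j => (R ∙ x j).annihilator)
      (Finset.mem_univ i)
    have h1 : r ∈ (R ∙ x i).annihilator := hle hr
    rw [Submodule.mem_annihilator_span_singleton] at h1
    exact h1
  obtain ⟨i, -, hi⟩ := (Ideal.IsPrime.inf_le' hp).mp key
  refine Set.mem_iUnion.mpr ⟨i, ap_iff.mpr ⟨hp, x i, ?_⟩⟩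
  apply le_antisymm
  · intro r hr
    rw [Submodule.mem_annihilator_span_singleton]
    rw [hx, Submodule.mem_annihilator_span_singleton] at hr
    exact congrFun hr i
  · exact hi

/-! #### Images of secondary modules -/

lemma surj_smul_pow {M : Type} [AddCommGroup M] [Module R M] (S : Submodule R M) (r : R)
    (h : ∀ x ∈ S, ∃ y ∈ S, r • y = x) (k : ℕ) :
    ∀ x ∈ S, ∃ y ∈ S, r ^ k • y = x := by
  induction k with
  | zero => intro x hx; exact ⟨x, hx, by simp⟩
  | succ k ih =>
    intro x hx
    obtain ⟨y, hy, hyx⟩ := ih x hx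
    obtain ⟨w, hw, hwy⟩ := h y hy
    refine ⟨w, hw, ?_⟩
    rw [pow_succ, mul_smul, hwy, hyx]

lemma isSecondaryWith_map {M W : Type} [AddCommGroup M] [Module R M] [AddCommGroup W]
    [Module R W] (g : M →ₗ[R] W) {S : Submodule R M} {p : Ideal R}
    (h : GLC.IsSecondaryWith S p) (h0 : S.map g ≠ ⊥) :
    GLC.IsSecondaryWith (S.map g) p := by
  obtain ⟨hbot, hrad, hdich⟩ := h
  have hsurj : ∀ r : R, (∀ x ∈ S, ∃ y ∈ S, r • y = x) →
      ∀ w ∈ S.map g, ∃ v ∈ S.map g, r • v = w := by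
    rintro r hr w ⟨x, hx, rfl⟩
    obtain ⟨y, hy, hyx⟩ := hr x hx
    exact ⟨g y, Submodule.mem_map_of_mem hy, by rw [← map_smul, hyx]⟩
  have hannle : S.annihilator ≤ (S.map g).annihilator := by
    intro s hs
    rw [Submodule.mem_annihilator] at hs ⊢
    rintro w ⟨x, hx, rfl⟩
    rw [← map_smul, hs x hx, map_zero]
  refine ⟨h0, ?_, ?_⟩
  · apply le_antisymm
    · intro r hr
      rcases hdich r with hsur | hpmem
      · obtain ⟨k, hk⟩ := hr
        obtain ⟨w, hw, hw0⟩ := (Submodule.ne_bot_iff _).mp h0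
        obtain ⟨v, hv, hvw⟩ := surj_smul_pow _ r (hsurj r hsur) k w hw
        exfalso
        apply hw0
        rw [← hvw]
        exact Submodule.mem_annihilator.mp hk v hv
      · rwa [hrad] at hpmem
    · rw [← hrad]
      exact Ideal.radical_mono hannle
  · intro r
    rcases hdich r with hsur | hpmem
    · exact Or.inl (hsurj r hsur)
    · exact Or.inr (Ideal.radical_mono hannle hpmem)

/-! #### Uniqueness of attached primes -/

lemma top_ne_bot_of_nontrivial {W : Type} [AddCommGroup W] [Module R W] [h : Nontrivial W] :
    (⊤ : Submodule R W) ≠ ⊥ := by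
  intro heq
  obtain ⟨x, hx⟩ := exists_ne (0 : W)
  exact hx ((Submodule.mem_bot R).mp (heq ▸ Submodule.mem_top))

lemma map_self_mkQ_eq_bot {W : Type} [AddCommGroup W] [Module R W] (B : Submodule R W) :
    B.map B.mkQ = ⊥ := by
  rw [eq_bot_iff]
  rintro w ⟨x, hx, rfl⟩
  simp only [Submodule.mkQ_apply, Submodule.mem_bot]
  exact (Submodule.Quotient.mk_eq_zero B).mpr hx

lemma mem_of_secondary_quotient {A : Type} [AddCommGroup A] [Module R A]
    {n : ℕ} {S : Fin n → Submodule R A} {p : Fin n → Ideal R}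
    (hsup : (⨆ i, S i) = ⊤) (hsec : ∀ i, GLC.IsSecondaryWith (S i) (p i))
    {B : Submodule R A} {q : Ideal R}
    (hq : GLC.IsSecondaryWith (⊤ : Submodule R (A ⧸ B)) q) :
    ∃ i, p i = q := by
  classical
  set S' : Fin n → Submodule R (A ⧸ B) := fun i => (S i).map B.mkQ with hS'
  have hsup' : (⨆ i, S' i) = ⊤ := by
    simp only [hS']
    rw [← Submodule.map_iSup, hsup, Submodule.map_top, Submodule.range_mkQ]
  have hPex : ∃ I : Finset (Fin n), (⨆ i ∈ I, S' i) = ⊤ := by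
    refine ⟨Finset.univ, ?_⟩
    rw [← hsup']
    apply le_antisymm
    · exact iSup₂_le fun i _ => le_iSup S' i
    · exact iSup_le fun i => le_iSup₂ (f := fun i _ => S' i) i (Finset.mem_univ i)
  have hPcard : ∃ k : ℕ, ∃ I : Finset (Fin n), I.card = k ∧ (⨆ i ∈ I, S' i) = ⊤ := by
    obtain ⟨I, hI⟩ := hPex
    exact ⟨I.card, I, rfl, hI⟩
  obtain ⟨I, hIcard, hI⟩ := Nat.find_spec hPcard
  have hmin : ∀ J : Finset (Fin n), (⨆ i ∈ J, S' i) = ⊤ → I.card ≤ J.card := by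
    intro J hJ
    rw [hIcard]
    exact Nat.find_min' hPcard ⟨J, rfl, hJ⟩
  have htopbot : (⊤ : Submodule R (A ⧸ B)) ≠ ⊥ := hq.1
  have hInonempty : I.Nonempty := by
    rcases Finset.eq_empty_or_nonempty I with rfl | h
    · exfalso
      apply htopbot
      rw [← hI]
      simp
    · exact h
  obtain ⟨i₀, hi₀⟩ := hInonempty
  set B' : Submodule R (A ⧸ B) := ⨆ i ∈ I.erase i₀, S' i with hB'
  have hB'top : B' ≠ ⊤ := by
    intro heq
    have hcard := hmin (I.erase i₀) heq
    exact absurd hcard (not_le.mpr (Finset.card_erase_lt_of_mem hi₀))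
  have hsplit : S' i₀ ⊔ B' = ⊤ := by
    rw [hB', ← Finset.iSup_insert, Finset.insert_erase hi₀, hI]
  have hWnontriv : Nontrivial ((A ⧸ B) ⧸ B') :=
    Submodule.Quotient.nontrivial_iff.mpr hB'top
  have hWne : (⊤ : Submodule R ((A ⧸ B) ⧸ B')) ≠ ⊥ := top_ne_bot_of_nontrivial
  have hmapS : (S' i₀).map B'.mkQ = ⊤ := by
    have h1 : (S' i₀ ⊔ B').map B'.mkQ = ⊤ := by
      rw [hsplit, Submodule.map_top, Submodule.range_mkQ]
    rwa [Submodule.map_sup, map_self_mkQ_eq_bot, sup_bot_eq] at h1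
  have hS'ne : S' i₀ ≠ ⊥ := by
    intro heq
    rw [heq, Submodule.map_bot] at hmapS
    exact hWne hmapS.symm
  have h1 : GLC.IsSecondaryWith (S' i₀) (p i₀) :=
    isSecondaryWith_map B.mkQ (hsec i₀) hS'ne
  have h2 : GLC.IsSecondaryWith (⊤ : Submodule R ((A ⧸ B) ⧸ B')) (p i₀) := by
    have := isSecondaryWith_map B'.mkQ h1 (by rw [hmapS]; exact hWne)
    rwa [hmapS] at this
  have h3 : GLC.IsSecondaryWith (⊤ : Submodule R ((A ⧸ B) ⧸ B')) q := by
    have hmaptop : (⊤ : Submodule R (A ⧸ B)).map B'.mkQ = ⊤ := by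
      rw [Submodule.map_top, Submodule.range_mkQ]
    have := isSecondaryWith_map B'.mkQ hq (by rw [hmaptop]; exact hWne)
    rwa [hmaptop] at this
  exact ⟨i₀, by rw [← h2.2.1, h3.2.1]⟩

lemma exists_secondary_quotient {A : Type} [AddCommGroup A] [Module R A]
    {n : ℕ} {S : Fin n → Submodule R A} {p : Fin n → Ideal R}
    (hsup : (⨆ i, S i) = ⊤) (hsec : ∀ i, GLC.IsSecondaryWith (S i) (p i))
    (hirr : ∀ i : Fin n, (⨆ j ∈ ({i}ᶜ : Set (Fin n)), S j) ≠ ⊤) (i : Fin n) :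
    ∃ B : Submodule R A, GLC.IsSecondaryWith (⊤ : Submodule R (A ⧸ B)) (p i) := by
  classical
  set B : Submodule R A := ⨆ j ∈ ({i}ᶜ : Set (Fin n)), S j with hB
  have hBne : B ≠ ⊤ := hirr i
  have hWnontriv : Nontrivial (A ⧸ B) :=
    Submodule.Quotient.nontrivial_iff.mpr hBne
  have hWne : (⊤ : Submodule R (A ⧸ B)) ≠ ⊥ := top_ne_bot_of_nontrivial
  have hsplit : S i ⊔ B = ⊤ := by
    rw [← hsup]
    apply le_antisymm
    · apply sup_le (le_iSup S i)
      rw [hB]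
      exact iSup₂_le fun j _ => le_iSup S j
    · apply iSup_le
      intro j
      by_cases hj : j = i
      · subst hj; exact le_sup_left
      · refine le_trans ?_ le_sup_right
        rw [hB]
        exact le_iSup₂ (f := fun j _ => S j) j (Set.mem_compl_singleton_iff.mpr hj)
  have hmapS : (S i).map B.mkQ = ⊤ := by
    have h1 : (S i ⊔ B).map B.mkQ = ⊤ := by
      rw [hsplit, Submodule.map_top, Submodule.range_mkQ]
    rwa [Submodule.map_sup, map_self_mkQ_eq_bot, sup_bot_eq] at h1
  refine ⟨B, ?_⟩
  have := isSecondaryWith_map B.mkQ (hsec i) (by rw [hmapS]; exact hWne)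
  rwa [hmapS] at this

end AttAux

/-- `Att_R(Hom_R(C, E(R/m))) = Ass_R(C)` for `C` finitely
generated over a Noetherian local ring. -/
theorem attachedPrimes_hom_injectiveHull (R : Type) [CommRing R]
    [IsNoetherianRing R] [IsLocalRing R] (C : Type) [AddCommGroup C] [Module R C]
    [Module.Finite R C] (E : Type) [AddCommGroup E] [Module R E]
    (hE : IsResidueFieldInjectiveHull R E) :
    attachedPrimes R (C →ₗ[R] E) = associatedPrimes R C := by

  classical
  haveI hNoeth : IsNoetherian R C := isNoetherian_of_isNoetherianRing_of_finite R C
  have hfin : (associatedPrimes R C).Finite := AttAux.assPrimes_finite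
  set n := hfin.toFinset.card with hn
  set e := hfin.toFinset.equivFin with he
  set p : Fin n → Ideal R := fun i => ((e.symm i : hfin.toFinset) : Ideal R) with hp
  have hpinj : Function.Injective p := by
    intro i j hij
    exact e.symm.injective (Subtype.ext hij)
  have hpmem : ∀ i, p i ∈ associatedPrimes R C := fun i =>
    hfin.mem_toFinset.mp (e.symm i).2
  have hrange : ∀ q ∈ associatedPrimes R C, ∃ i, p i = q := by
    intro q hq
    refine ⟨e ⟨q, hfin.mem_toFinset.mpr hq⟩, ?_⟩
    simp only [hp, Equiv.symm_apply_apply]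
  choose Q hQ1 hQ2 using fun i => AttAux.exists_primary (hpmem i)
  have hinf : (⨅ i, Q i) = ⊥ := by
    by_contra h
    haveI : Nontrivial (⨅ i, Q i : Submodule R C) :=
      Submodule.nontrivial_iff_ne_bot.mpr h
    obtain ⟨P, hP⟩ := associatedPrimes.nonempty R (⨅ i, Q i : Submodule R C)
    have hPC : P ∈ associatedPrimes R C :=
      associatedPrimes.subset_of_injective (Submodule.injective_subtype _) hP
    obtain ⟨i, rfl⟩ := hrange P hPC
    apply hQ1 i
    exact associatedPrimes.subset_of_injective
      (f := Submodule.inclusion (iInf_le Q i)) (Submodule.inclusion_injective _) hP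
  set S : Fin n → Submodule R (C →ₗ[R] E) := fun i => AttAux.pperp E (Q i) with hS
  have hsec : ∀ i, GLC.IsSecondaryWith (S i) (p i) := fun i =>
    AttAux.isSecondaryWith_pperp hE (hQ2 i)
  have hsup : (⨆ i, S i) = ⊤ := AttAux.sup_pperp_eq_top hE Q hinf
  have hirr : ∀ i : Fin n, (⨆ j ∈ ({i}ᶜ : Set (Fin n)), S j) ≠ ⊤ := by
    intro i hcon
    have hN : (⨅ j ∈ ({i}ᶜ : Set (Fin n)), Q j) ≠ ⊥ := by
      intro hbot
      set φ : C →ₗ[R] ∀ j : ({i}ᶜ : Set (Fin n)), C ⧸ Q (j : Fin n) :=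
        LinearMap.pi (fun j => (Q (j : Fin n)).mkQ) with hφ
      have hφinj : Function.Injective φ := by
        rw [← LinearMap.ker_eq_bot, hφ, LinearMap.ker_pi]
        simp only [Submodule.ker_mkQ]
        rw [iInf_subtype'']
        exact hbot
      have hassC := associatedPrimes.subset_of_injective (f := φ) hφinj (hpmem i)
      have hout := AttAux.assPrimes_pi (R := R)
        (fun j : ({i}ᶜ : Set (Fin n)) => C ⧸ Q (j : Fin n)) hassC
      obtain ⟨j, hj⟩ := Set.mem_iUnion.mp hout
      rw [hQ2 (j : Fin n)] at hj
      have : p (j : Fin n) = p i := (Set.mem_singleton_iff.mp hj).symm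
      have hji : (j : Fin n) = i := hpinj this
      exact (Set.mem_compl_singleton_iff.mp j.2) hji
    apply AttAux.pperp_ne_top hE hN
    rw [eq_top_iff, ← hcon]
    apply iSup₂_le
    intro j hj
    exact AttAux.pperp_anti E (iInf₂_le j hj)
  apply Set.eq_of_subset_of_subset
  · rintro q ⟨m, T, r, hTsup, hTsec, hrinj, hTirr, j, rfl⟩
    obtain ⟨B, hB⟩ := AttAux.exists_secondary_quotient hTsup hTsec hTirr j
    obtain ⟨i, hi⟩ := AttAux.mem_of_secondary_quotient hsup hsec hB
    rw [← hi]
    exact hpmem i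
  · intro q hq
    obtain ⟨i, rfl⟩ := hrange q hq
    exact ⟨n, S, p, hsup, hsec, hpinj, hirr, i, rfl⟩
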